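/- Euler's identity: in the ring of formal power series ℚ(q)[[x]], Σ_{r≥0} x^r / ((1-q)(1-q^2)⋯(1-q^r)) = 1/∏_{n≥0}(1 - q^n x), i.e., the q-exponential exp_q(x/(1-q)) equals the inverse of the infinite Pochhammer product (x; q)_∞. -/

import Mathlib

noncomputable section

instance : TopologicalSpace (PowerSeries ℚ) :=
  TopologicalSpace.induced (fun f (n : ℕ) => PowerSeries.coeff (R := ℚ) n f) inferInstance

instance : TopologicalSpace (PowerSeries (PowerSeries ℚ)) :=
  TopologicalSpace.induced
    (fun f (n : ℕ) => PowerSeries.coeff (R := PowerSeries ℚ) n f) inferInstance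

namespace Stmt4Aux

open PowerSeries Filter

abbrev R : Type := PowerSeries ℚ
abbrev S : Type := PowerSeries R

instance : T2Space R :=
  Topology.IsEmbedding.t2Space
    (f := fun f (n : ℕ) => PowerSeries.coeff (R := ℚ) n f)
    ⟨⟨rfl⟩, fun _ _ h => PowerSeries.ext fun n => congrFun h n⟩

instance : T2Space S :=
  Topology.IsEmbedding.t2Space
    (f := fun f (n : ℕ) => PowerSeries.coeff (R := R) n f)
    ⟨⟨rfl⟩, fun _ _ h => PowerSeries.ext fun n => congrFun h n⟩

/-- The factors `1 - q^n x`. -/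
def f (n : ℕ) : S := 1 - PowerSeries.C (R := R) ((PowerSeries.X : R) ^ n) * PowerSeries.X

/-- `(q;q)_r = (1-q)⋯(1-q^r)`. -/
def D (r : ℕ) : R := ∏ i ∈ Finset.range r, (1 - (PowerSeries.X : R) ^ (i + 1))

lemma constantCoeff_D (r : ℕ) : constantCoeff (R := ℚ) (D r) = 1 := by
  rw [D, map_prod]
  refine Finset.prod_eq_one fun i _ => ?_
  simp

lemma constantCoeff_D_ne (r : ℕ) : constantCoeff (R := ℚ) (D r) ≠ 0 := by
  rw [constantCoeff_D]; norm_num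

lemma D_ne_zero (r : ℕ) : D r ≠ 0 := fun h => constantCoeff_D_ne r (by rw [h, map_zero])

lemma D_succ (r : ℕ) : D (r + 1) = D r * (1 - (PowerSeries.X : R) ^ (r + 1)) :=
  Finset.prod_range_succ _ _

/-- `exp_q(x/(1-q))`. -/
def E : S := PowerSeries.mk fun r => (D r)⁻¹

/-- The limit of the partial products, defined coefficientwise. -/
def P : S := PowerSeries.mk fun m => PowerSeries.mk fun k =>
  PowerSeries.coeff (R := ℚ) k (PowerSeries.coeff (R := R) m (∏ n ∈ Finset.range (k + 1), f n))

lemma dvd_coeff_mul (A B : S) (d : R) (h : ∀ j, d ∣ coeff (R := R) j B) (m : ℕ) :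
    d ∣ coeff (R := R) m (A * B) := by
  rw [coeff_mul]
  exact Finset.dvd_sum fun p _ => (h p.2).mul_left _

/-- Factors with large index don't change low `q`-coefficients. -/
lemma prod_sub_one_dvd (k : ℕ) (U : Finset ℕ) (hU : ∀ n ∈ U, k < n) (m : ℕ) :
    (PowerSeries.X : R) ^ (k + 1) ∣ coeff (R := R) m (∏ n ∈ U, f n - 1) := by
  induction U using Finset.induction_on with
  | empty => simp
  | @insert a U ha ih =>
    rw [Finset.prod_insert ha]
    have key : f a * ∏ n ∈ U, f n - 1 =
        (∏ n ∈ U, f n - 1) - PowerSeries.C (R := R) ((PowerSeries.X : R) ^ a) *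
          ((∏ n ∈ U, f n) * PowerSeries.X) := by
      rw [f]; ring
    rw [key, map_sub]
    refine dvd_sub (ih fun n hn => hU n (Finset.mem_insert_of_mem hn)) ?_
    rw [coeff_C_mul]
    exact Dvd.dvd.mul_right
      (pow_dvd_pow _ (hU a (Finset.mem_insert_self a U))) _

lemma prod_dvd (k : ℕ) (Sf : Finset ℕ) (h : Finset.range (k + 1) ⊆ Sf) (m : ℕ) :
    (PowerSeries.X : R) ^ (k + 1) ∣
      coeff (R := R) m (∏ n ∈ Sf, f n - ∏ n ∈ Finset.range (k + 1), f n) := by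
  have hsplit : ∏ n ∈ Sf, f n - ∏ n ∈ Finset.range (k + 1), f n =
      (∏ n ∈ Finset.range (k + 1), f n) * (∏ n ∈ Sf \ Finset.range (k + 1), f n - 1) := by
    rw [mul_sub, mul_one, mul_comm, Finset.prod_sdiff h]
  rw [hsplit]
  refine dvd_coeff_mul _ _ _ (fun j => ?_) m
  exact prod_sub_one_dvd k _ (fun n hn => by
    have := (Finset.mem_sdiff.mp hn).2
    simpa using Nat.lt_of_succ_le (Nat.not_lt.mp (by simpa [Finset.mem_range] using this))) j

lemma coeff_prod_stable (k : ℕ) (Sf : Finset ℕ) (h : Finset.range (k + 1) ⊆ Sf) (m j : ℕ)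
    (hj : j ≤ k) :
    PowerSeries.coeff (R := ℚ) j (coeff (R := R) m (∏ n ∈ Sf, f n)) =
      PowerSeries.coeff (R := ℚ) j (coeff (R := R) m (∏ n ∈ Finset.range (k + 1), f n)) := by
  have := (X_pow_dvd_iff.mp (prod_dvd k Sf h m)) j (Nat.lt_succ_of_le hj)
  rw [map_sub, map_sub] at this
  linarith [this]

lemma coeff_P (m k : ℕ) :
    PowerSeries.coeff (R := ℚ) k (coeff (R := R) m P) =
      PowerSeries.coeff (R := ℚ) k (coeff (R := R) m (∏ n ∈ Finset.range (k + 1), f n)) := by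
  rw [P, coeff_mk, coeff_mk]

lemma hasProd : HasProd f P := by
  rw [HasProd, SummationFilter.unconditional_filter]
  rw [nhds_induced (fun f (n : ℕ) => PowerSeries.coeff (R := R) n f), tendsto_comap_iff,
    tendsto_pi_nhds]
  intro m
  rw [nhds_induced (fun f (n : ℕ) => PowerSeries.coeff (R := ℚ) n f), tendsto_comap_iff,
    tendsto_pi_nhds]
  intro k
  refine Tendsto.congr' ?_ tendsto_const_nhds
  rw [EventuallyEq, eventually_atTop]
  refine ⟨Finset.range (k + 1), fun Sf hSf => ?_⟩
  simp only [Function.comp]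
  rw [coeff_P, coeff_prod_stable k Sf hSf m k le_rfl]

/-- Telescoping: `E * ∏_{n<N} (1 - q^n x) = Σ_r q^{Nr} x^r / (q;q)_r`. -/
lemma tele (N : ℕ) : E * ∏ n ∈ Finset.range N, f n =
    PowerSeries.mk fun r => (PowerSeries.X : R) ^ (N * r) * (D r)⁻¹ := by
  induction N with
  | zero =>
    simp only [Finset.range_zero, Finset.prod_empty, mul_one]
    ext r
    simp [E, coeff_mk]
  | succ N ih =>
    rw [Finset.prod_range_succ, ← mul_assoc, ih]
    refine PowerSeries.ext fun r => ?_
    have hmulX0 : coeff (R := R) 0 ((PowerSeries.mk fun r => (PowerSeries.X : R) ^ (N * r) * (D r)⁻¹)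
        * PowerSeries.X) = 0 := by
      rw [coeff_zero_eq_constantCoeff, map_mul, constantCoeff_X, mul_zero]
    have expand : ∀ A : S, A * f N = A - PowerSeries.C (R := R) ((PowerSeries.X : R) ^ N)
        * (A * PowerSeries.X) := by
      intro A; rw [f]; ring
    rw [expand, map_sub, coeff_C_mul]
    cases r with
    | zero =>
      rw [hmulX0, mul_zero, sub_zero, coeff_mk, coeff_mk]
      simp
    | succ s =>
      rw [coeff_succ_mul_X, coeff_mk, coeff_mk, coeff_mk]
      -- goal: X^(N*(s+1)) * (D (s+1))⁻¹ - X^N * (X^(N*s) * (D s)⁻¹)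
      --       = X^((N+1)*(s+1)) * (D (s+1))⁻¹
      apply mul_right_cancel₀ (D_ne_zero (s + 1))
      have hDs : (D s)⁻¹ * D (s + 1) = 1 - (PowerSeries.X : R) ^ (s + 1) := by
        rw [D_succ, ← mul_assoc, PowerSeries.inv_mul_cancel _ (constantCoeff_D_ne s), one_mul]
      have hDs1 : (D (s + 1))⁻¹ * D (s + 1) = 1 :=
        PowerSeries.inv_mul_cancel _ (constantCoeff_D_ne (s + 1))
      rw [sub_mul, mul_assoc, hDs1, mul_one, mul_assoc, mul_assoc, hDs, mul_assoc, hDs1,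
        mul_one]
      ring_nf

lemma P_prod_dvd (k : ℕ) (j : ℕ) :
    (PowerSeries.X : R) ^ (k + 1) ∣ coeff (R := R) j (P - ∏ n ∈ Finset.range (k + 1), f n) := by
  rw [X_pow_dvd_iff]
  intro i hi
  rw [map_sub, map_sub, coeff_P,
    coeff_prod_stable i (Finset.range (k + 1))
      (Finset.range_subset_range.mpr (by omega)) j i le_rfl, sub_self]

lemma E_mul_P : E * P = 1 := by
  refine PowerSeries.ext fun m => PowerSeries.ext fun k => ?_
  have h1 : PowerSeries.coeff (R := ℚ) k (coeff (R := R) m (E * P)) =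
      PowerSeries.coeff (R := ℚ) k (coeff (R := R) m (E * ∏ n ∈ Finset.range (k + 1), f n)) := by
    have hd : (PowerSeries.X : R) ^ (k + 1) ∣
        coeff (R := R) m (E * P - E * ∏ n ∈ Finset.range (k + 1), f n) := by
      rw [← mul_sub]
      exact dvd_coeff_mul _ _ _ (fun j => P_prod_dvd k j) m
    have := (X_pow_dvd_iff.mp hd) k (Nat.lt_succ_self k)
    rw [map_sub, map_sub] at this
    linarith [this]
  rw [h1, tele (k + 1), coeff_mk]
  cases m with
  | zero =>
    simp [D]
  | succ s =>
    have hdvd : (PowerSeries.X : R) ^ (k + 1) ∣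
        (PowerSeries.X : R) ^ ((k + 1) * (s + 1)) * (D (s + 1))⁻¹ :=
      Dvd.dvd.mul_right (pow_dvd_pow _ (Nat.le_mul_of_pos_right _ (Nat.succ_pos s))) _
    rw [(X_pow_dvd_iff.mp hdvd) k (Nat.lt_succ_self k)]
    simp [PowerSeries.coeff_one]

lemma main : E * ∏' n : ℕ, f n = 1 := by
  rw [hasProd.tprod_eq, E_mul_P]

end Stmt4Aux

/-- Euler's identity: in `ℚ[[q]][[x]]`,
`Σ_{r≥0} x^r/((1-q)(1-q^2)⋯(1-q^r)) = 1/(x;q)_∞`, i.e. the `q`-exponential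
`exp_q(x/(1-q))` is the inverse of the infinite Pochhammer product
`(x;q)_∞ = ∏_{n≥0}(1-q^n x)` (an infinite product converging coefficientwise,
formalized by `∏'`).  Equivalently, their product is `1`. -/
theorem stmt4 :
    (PowerSeries.mk fun r =>
        (∏ i ∈ Finset.range r, (1 - (PowerSeries.X : PowerSeries ℚ) ^ (i + 1)))⁻¹)
      * (∏' n : ℕ, ((1 : PowerSeries (PowerSeries ℚ))
            - PowerSeries.C (R := PowerSeries ℚ) ((PowerSeries.X : PowerSeries ℚ) ^ n)
              * PowerSeries.X))
      = 1 :=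
  Stmt4Aux.main

end
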